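/- Let δ ∈ (0, 1/2) and set α := (1 + log(1−δ))/(1 − log δ). If T1 is a rooted balanced binary phylogenetic tree on a leaf-set of cardinality 2^m, and T2 is an arbitrary rooted binary phylogenetic tree with L(T2) = L(T1), then mast{T1, T2} ≥ α·m. -/

import Mathlib

/-!
# Rooted binary phylogenetic trees

`RTree L` is the type of rooted binary trees with leaves labelled by elements of `L`:
every internal vertex has exactly two children (a left child and a right child), and
a tree with one leaf is a single vertex.
-/

inductive RTree (L : Type) : Type
  | leaf : L → RTree L
  | node : RTree L → RTree L → RTree L

namespace RTree

variable {L : Type}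

/-- The list of leaf labels of a rooted binary tree, read from left to right. -/
def leafList : RTree L → List L
  | leaf b => [b]
  | node l r => leafList l ++ leafList r

/-- The number of leaves of a rooted binary tree. -/
def numLeaves (T : RTree L) : ℕ := T.leafList.length

/-- The set of leaf labels of a rooted binary tree. -/
def leafSet (T : RTree L) : Set L := {b | b ∈ T.leafList}

/-- The height of a rooted binary tree: the maximum distance from the root to a leaf. -/
def height : RTree L → ℕ
  | leaf _ => 0
  | node l r => max (height l) (height r) + 1

/-- A rooted binary tree is balanced if all of its leaves are at the same distance
from the root. -/
def IsBalanced : RTree L → Prop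
  | leaf _ => True
  | node l r => IsBalanced l ∧ IsBalanced r ∧ height l = height r

/-- A rooted binary tree is phylogenetic if its leaves are labelled bijectively by a
finite set, i.e. all leaf labels are distinct. -/
def IsPhylo (T : RTree L) : Prop := T.leafList.Nodup

/-- `Embeds S T` is the subtree relation `S ⪯ T`: there is an injective map `f` from the
vertices of `S` to the vertices of `T` such that `f x = x` for every leaf `x` of `S`
(leaves being identified across trees by their labels) and
`f (x ∧ y) = f x ∧ f y` for all vertices `x`, `y` of `S`, where `∧` denotes the most
recent common ancestor.  Equivalently (for trees with distinct leaf labels), `S` is the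
restriction of `T` to the leaf set of `S`, up to rooted isomorphism; this structural
characterization is taken as the definition. -/
inductive Embeds : RTree L → RTree L → Prop
  | leaf (b : L) : Embeds (RTree.leaf b) (RTree.leaf b)
  | left {S l r : RTree L} : Embeds S l → Embeds S (RTree.node l r)
  | right {S l r : RTree L} : Embeds S r → Embeds S (RTree.node l r)
  | pair {s₁ s₂ l r : RTree L} :
      Embeds s₁ l → Embeds s₂ r → Embeds (RTree.node s₁ s₂) (RTree.node l r)
  | pair_swap {s₁ s₂ l r : RTree L} :
      Embeds s₁ r → Embeds s₂ l → Embeds (RTree.node s₁ s₂) (RTree.node l r)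

/-- `mast T₁ T₂` is the maximum cardinality of a subset `X ⊆ L(T₁) ∩ L(T₂)` such that
the restrictions `T₁|X` and `T₂|X` are isomorphic; equivalently, the maximum number of
leaves of a rooted binary phylogenetic tree `S` with `S ⪯ T₁` and `S ⪯ T₂`. -/
noncomputable def mast (T₁ T₂ : RTree L) : ℕ :=
  sSup {n | ∃ S : RTree L, S.IsPhylo ∧ Embeds S T₁ ∧ Embeds S T₂ ∧ S.numLeaves = n}

end RTree

open scoped Classical

namespace RTreeAux

open RTree

variable {L : Type}

/-- Subtree relation. -/
inductive Sub : RTree L → RTree L → Prop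
  | refl (t : RTree L) : Sub t t
  | left {w l r : RTree L} : Sub w l → Sub w (RTree.node l r)
  | right {w l r : RTree L} : Sub w r → Sub w (RTree.node l r)

lemma leafList_ne_nil : ∀ T : RTree L, T.leafList ≠ []
  | RTree.leaf b => by simp [RTree.leafList]
  | RTree.node l r => by
      simp [RTree.leafList]
      exact fun h _ => leafList_ne_nil l h

lemma one_le_numLeaves (T : RTree L) : 1 ≤ T.numLeaves := by
  have := leafList_ne_nil T
  cases h : T.leafList with
  | nil => exact absurd h this
  | cons a tl => simp [RTree.numLeaves, h]

lemma embeds_leaf_of_mem {b : L} : ∀ {T : RTree L}, b ∈ T.leafList → Embeds (RTree.leaf b) T := by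
  intro T
  induction T with
  | leaf c =>
      intro h
      simp [RTree.leafList] at h
      subst h
      exact Embeds.leaf b
  | node l r ihl ihr =>
      intro h
      simp [RTree.leafList] at h
      rcases h with h | h
      · exact Embeds.left (ihl h)
      · exact Embeds.right (ihr h)

lemma leafList_subset_of_embeds {S T : RTree L} (h : Embeds S T) :
    ∀ x ∈ S.leafList, x ∈ T.leafList := by
  induction h with
  | leaf b => intro x hx; exact hx
  | left _ ih => intro x hx; simp [RTree.leafList]; exact Or.inl (ih x hx)
  | right _ ih => intro x hx; simp [RTree.leafList]; exact Or.inr (ih x hx)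
  | pair _ _ ih1 ih2 =>
      intro x hx
      simp [RTree.leafList] at hx ⊢
      rcases hx with hx | hx
      · exact Or.inl (ih1 x hx)
      · exact Or.inr (ih2 x hx)
  | pair_swap _ _ ih1 ih2 =>
      intro x hx
      simp [RTree.leafList] at hx ⊢
      rcases hx with hx | hx
      · exact Or.inr (ih1 x hx)
      · exact Or.inl (ih2 x hx)

lemma numLeaves_le_of_embeds {S T : RTree L} (h : Embeds S T) : S.numLeaves ≤ T.numLeaves := by
  induction h with
  | leaf b => exact le_refl _
  | left _ ih => simp only [RTree.numLeaves, RTree.leafList, List.length_append] at *; omega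
  | right _ ih => simp only [RTree.numLeaves, RTree.leafList, List.length_append] at *; omega
  | pair _ _ ih1 ih2 => simp only [RTree.numLeaves, RTree.leafList, List.length_append] at *; omega
  | pair_swap _ _ ih1 ih2 => simp only [RTree.numLeaves, RTree.leafList, List.length_append] at *; omega

lemma embeds_of_sub {S w u : RTree L} (hE : Embeds S w) (hs : Sub w u) : Embeds S u := by
  induction hs with
  | refl => exact hE
  | left _ ih => exact Embeds.left ih
  | right _ ih => exact Embeds.right ih

lemma mem_of_sub {w u : RTree L} (hs : Sub w u) : ∀ x ∈ w.leafList, x ∈ u.leafList := by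
  induction hs with
  | refl => exact fun x hx => hx
  | left _ ih => intro x hx; simp [RTree.leafList]; exact Or.inl (ih x hx)
  | right _ ih => intro x hx; simp [RTree.leafList]; exact Or.inr (ih x hx)

lemma attach_lemma {w u S : RTree L} {x : L} (hs : Sub w u) (hE : Embeds S w)
    (hxu : x ∈ u.leafList) (hxw : x ∉ w.leafList) :
    Embeds (RTree.node S (RTree.leaf x)) u := by
  induction hs with
  | refl => exact absurd hxu hxw
  | @left l r hsub ih =>
      simp [RTree.leafList] at hxu
      rcases hxu with hx | hx
      · exact Embeds.left (ih hx)
      · exact Embeds.pair (embeds_of_sub hE hsub) (embeds_leaf_of_mem hx)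
  | @right l r hsub ih =>
      simp [RTree.leafList] at hxu
      rcases hxu with hx | hx
      · exact Embeds.pair_swap (embeds_of_sub hE hsub) (embeds_leaf_of_mem hx)
      · exact Embeds.right (ih hx)

lemma numLeaves_balanced : ∀ {T : RTree L}, T.IsBalanced → T.numLeaves = 2 ^ T.height := by
  intro T
  induction T with
  | leaf b => intro _; simp [RTree.numLeaves, RTree.leafList, RTree.height]
  | node l r ihl ihr =>
      rintro ⟨hl, hr, heq⟩
      simp only [RTree.numLeaves, RTree.leafList, List.length_append, RTree.height] at *
      rw [ihl hl, ihr hr, heq]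
      simp [pow_succ]
      ring

lemma filter_split {C : Finset L} {l1 l2 : List L} (hnd : (l1 ++ l2).Nodup)
    (hsub : ∀ x ∈ C, x ∈ l1 ++ l2) :
    (C.filter (fun x => x ∈ l1)).card + (C.filter (fun x => x ∈ l2)).card = C.card := by
  have hdisj : l1.Disjoint l2 := List.disjoint_of_nodup_append hnd
  have h2 : C.filter (fun x => x ∈ l2) = C.filter (fun x => ¬ x ∈ l1) := by
    apply Finset.filter_congr
    intro x hx
    have := hsub x hx
    simp only [List.mem_append] at this
    constructor
    · intro h2 h1; exact hdisj h1 h2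
    · intro h1; tauto
  rw [h2]
  exact Finset.card_filter_add_card_filter_not _


lemma exists_subtree (C : Finset L) (t : ℝ) (ht : 1 ≤ t) :
    ∀ u : RTree L, t < ((C.filter (fun x => x ∈ u.leafList)).card : ℝ) →
    ∃ w : RTree L, Sub w u ∧ t / 2 < ((C.filter (fun x => x ∈ w.leafList)).card : ℝ) ∧
      ((C.filter (fun x => x ∈ w.leafList)).card : ℝ) ≤ t := by
  intro u
  induction u with
  | leaf b =>
      intro h
      exfalso
      have hle : (C.filter (fun x => x ∈ (RTree.leaf b).leafList)).card ≤ 1 := by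
        apply Finset.card_le_one.mpr
        intro a ha c hc
        simp [RTree.leafList] at ha hc
        rw [ha.2, hc.2]
      have : ((C.filter (fun x => x ∈ (RTree.leaf b).leafList)).card : ℝ) ≤ 1 := by
        exact_mod_cast hle
      linarith
  | node l r ihl ihr =>
      intro h
      by_cases h1 : t < ((C.filter (fun x => x ∈ l.leafList)).card : ℝ)
      · obtain ⟨w, hw, hlo, hhi⟩ := ihl h1
        exact ⟨w, Sub.left hw, hlo, hhi⟩
      · by_cases h2 : t < ((C.filter (fun x => x ∈ r.leafList)).card : ℝ)
        · obtain ⟨w, hw, hlo, hhi⟩ := ihr h2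
          exact ⟨w, Sub.right hw, hlo, hhi⟩
        · push_neg at h1 h2
          have hsub : C.filter (fun x => x ∈ (RTree.node l r).leafList) ⊆
              C.filter (fun x => x ∈ l.leafList) ∪ C.filter (fun x => x ∈ r.leafList) := by
            intro x hx
            simp [RTree.leafList] at hx ⊢
            tauto
          have hcard : (C.filter (fun x => x ∈ (RTree.node l r).leafList)).card ≤
              (C.filter (fun x => x ∈ l.leafList)).card +
                (C.filter (fun x => x ∈ r.leafList)).card :=
            le_trans (Finset.card_le_card hsub) (Finset.card_union_le _ _)
          have hcR : ((C.filter (fun x => x ∈ (RTree.node l r).leafList)).card : ℝ) ≤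
              ((C.filter (fun x => x ∈ l.leafList)).card : ℝ) +
                ((C.filter (fun x => x ∈ r.leafList)).card : ℝ) := by exact_mod_cast hcard
          by_cases hlr : ((C.filter (fun x => x ∈ r.leafList)).card : ℝ) ≤
              ((C.filter (fun x => x ∈ l.leafList)).card : ℝ)
          · exact ⟨l, Sub.left (Sub.refl l), by linarith, h1⟩
          · push_neg at hlr
            exact ⟨r, Sub.right (Sub.refl r), by linarith, h2⟩

lemma main_lemma {δ : ℝ} (hδ0 : 0 < δ) (hδ2 : δ < 1/2) :
    ∀ (h : ℕ) (v u : RTree L) (C : Finset L), v.IsBalanced → v.leafList.Nodup →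
      v.height = h → C.Nonempty → (∀ x ∈ C, x ∈ v.leafList) → (∀ x ∈ C, x ∈ u.leafList) →
      ∃ S : RTree L, S.IsPhylo ∧ Embeds S v ∧ Embeds S u ∧
        (C.card : ℝ) * (1 - δ) ^ h ≤ (2 / δ) ^ S.numLeaves := by
  have hδ1 : δ < 1 := by linarith
  have h1δ : (0:ℝ) < 1 - δ := by linarith
  have h2δ : (0:ℝ) < 2 / δ := by positivity
  have h2δ1 : (1:ℝ) ≤ 2 / δ := by rw [le_div_iff₀ hδ0]; linarith
  intro h
  induction h with
  | zero =>
      intro v u C hbal hphy hht hne hCv hCu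
      cases v with
      | node l r => simp [RTree.height] at hht
      | leaf b =>
          obtain ⟨x, hx⟩ := hne
          have hxb : x = b := by simpa [RTree.leafList] using hCv x hx
          have hCb : C = {b} := by
            apply Finset.eq_singleton_iff_unique_mem.mpr
            exact ⟨hxb ▸ hx, fun y hy => by simpa [RTree.leafList] using hCv y hy⟩
          refine ⟨RTree.leaf b, by simp [RTree.IsPhylo, RTree.leafList], Embeds.leaf b,
            embeds_leaf_of_mem (hCu b (hCb ▸ Finset.mem_singleton_self b)), ?_⟩
          have hc1 : (C.card : ℝ) = 1 := by rw [hCb]; simp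
          rw [hc1]
          simpa [RTree.numLeaves, RTree.leafList] using h2δ1
  | succ h ih =>
      intro v u C hbal hphy hht hne hCv hCu
      cases v with
      | leaf b => simp [RTree.height] at hht
      | node vL vR =>
          obtain ⟨hbL, hbR, hhe⟩ := hbal
          simp only [RTree.height] at hht
          have hhL : vL.height = h := by omega
          have hhR : vR.height = h := by omega
          have hphy' : (vL.leafList ++ vR.leafList).Nodup := hphy
          have hndL : vL.leafList.Nodup := hphy'.of_append_left
          have hndR : vR.leafList.Nodup := hphy'.of_append_right
          have hdisj : vL.leafList.Disjoint vR.leafList := List.disjoint_of_nodup_append hphy'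
          have hCv' : ∀ x ∈ C, x ∈ vL.leafList ++ vR.leafList := hCv
          set CL := C.filter (fun x => x ∈ vL.leafList) with hCLdef
          set CR := C.filter (fun x => x ∈ vR.leafList) with hCRdef
          have hsum : CL.card + CR.card = C.card := filter_split hphy' hCv'
          have hCpos : (0:ℝ) < (C.card : ℝ) := by
            have := Finset.Nonempty.card_pos hne
            exact_mod_cast this
          by_cases hCRne : CR.Nonempty
          · by_cases hCLne : CL.Nonempty
            · -- both sides nonempty
              have hc2 : 2 ≤ C.card := by
                have h1 := Finset.Nonempty.card_pos hCLne
                have h2 := Finset.Nonempty.card_pos hCRne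
                omega
              by_cases hdR : (CR.card : ℝ) < δ * C.card
              · -- discard right side
                obtain ⟨S, hphS, hSL, hSu, hbound⟩ := ih vL u CL hbL hndL hhL hCLne
                  (fun x hx => (Finset.mem_filter.mp hx).2)
                  (fun x hx => hCu x (Finset.mem_filter.mp hx).1)
                refine ⟨S, hphS, Embeds.left hSL, hSu, ?_⟩
                have hCLge : (1-δ) * (C.card:ℝ) ≤ (CL.card:ℝ) := by
                  have hs : (CL.card:ℝ) + (CR.card:ℝ) = (C.card:ℝ) := by exact_mod_cast hsum
                  nlinarith
                calc (C.card:ℝ) * (1-δ)^(h+1) = ((1-δ) * (C.card:ℝ)) * (1-δ)^h := by ring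
                  _ ≤ (CL.card:ℝ) * (1-δ)^h := by
                      apply mul_le_mul_of_nonneg_right hCLge (by positivity)
                  _ ≤ (2/δ)^S.numLeaves := hbound
              · by_cases hdL : (CL.card : ℝ) < δ * C.card
                · -- discard left side
                  obtain ⟨S, hphS, hSR, hSu, hbound⟩ := ih vR u CR hbR hndR hhR hCRne
                    (fun x hx => (Finset.mem_filter.mp hx).2)
                    (fun x hx => hCu x (Finset.mem_filter.mp hx).1)
                  refine ⟨S, hphS, Embeds.right hSR, hSu, ?_⟩
                  have hCRge : (1-δ) * (C.card:ℝ) ≤ (CR.card:ℝ) := by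
                    have hs : (CL.card:ℝ) + (CR.card:ℝ) = (C.card:ℝ) := by exact_mod_cast hsum
                    nlinarith
                  calc (C.card:ℝ) * (1-δ)^(h+1) = ((1-δ) * (C.card:ℝ)) * (1-δ)^h := by ring
                    _ ≤ (CR.card:ℝ) * (1-δ)^h := by
                        apply mul_le_mul_of_nonneg_right hCRge (by positivity)
                    _ ≤ (2/δ)^S.numLeaves := hbound
                · -- main step
                  push_neg at hdR hdL
                  have hCR2 : (2:ℝ) ≤ (C.card:ℝ) := by exact_mod_cast hc2
                  have hhalf : (0:ℝ) < δ * (1-δ) * (C.card:ℝ) / 2 := by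
                    have hq := mul_pos (mul_pos hδ0 h1δ) hCpos
                    linarith only [hq]
                  set t := (1-δ) * (C.card:ℝ) with htdef
                  have ht1 : 1 ≤ t := by
                    have hq : (0:ℝ) ≤ (1/2 - δ) * ((C.card:ℝ) - 2) :=
                      mul_nonneg (by linarith) (by linarith)
                    rw [htdef]
                    linarith only [hq, hCR2, hδ2]
                  have hfu : C.filter (fun x => x ∈ u.leafList) = C :=
                    Finset.filter_true_of_mem hCu
                  have htlt : t < ((C.filter (fun x => x ∈ u.leafList)).card : ℝ) := by
                    rw [hfu, htdef]
                    have hq := mul_pos hδ0 hCpos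
                    linarith only [hq]
                  obtain ⟨w, hwsub, hslo, hshi⟩ := exists_subtree C t ht1 u htlt
                  set D := C.filter (fun x => x ∈ w.leafList) with hDdef
                  set E := C \ D with hEdef
                  have hDsubC : D ⊆ C := Finset.filter_subset _ _
                  have hsumD : (D.card:ℝ) ≤ t := hshi
                  have hDltC : D.card < C.card := by
                    have : (D.card:ℝ) < (C.card:ℝ) := by nlinarith
                    exact_mod_cast this
                  have hEne : E.Nonempty := by
                    rw [← Finset.card_pos, Finset.card_sdiff_of_subset hDsubC]
                    omega
                  have hEmem : ∀ x ∈ E, x ∈ C ∧ x ∉ w.leafList := by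
                    intro x hx
                    rw [hEdef, Finset.mem_sdiff] at hx
                    refine ⟨hx.1, fun hm => hx.2 ?_⟩
                    rw [hDdef, Finset.mem_filter]
                    exact ⟨hx.1, hm⟩
                  set DL := D.filter (fun x => x ∈ vL.leafList) with hDLdef
                  set DR := D.filter (fun x => x ∈ vR.leafList) with hDRdef
                  have hsumDLR : DL.card + DR.card = D.card :=
                    filter_split hphy' (fun x hx => hCv' x (hDsubC hx))
                  set EL := E.filter (fun x => x ∈ vL.leafList) with hELdef
                  set ER := E.filter (fun x => x ∈ vR.leafList) with hERdef
                  have hEsubC : E ⊆ C := Finset.sdiff_subset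
                  have hsumELR : EL.card + ER.card = E.card :=
                    filter_split hphy' (fun x hx => hCv' x (hEsubC hx))
                  clear_value CL CR t D E DL DR EL ER
                  -- the generic finishing step
                  have step : ∀ (A : RTree L) (DD : Finset L) (x : L),
                      A.IsBalanced → A.leafList.Nodup → A.height = h →
                      DD.Nonempty → (∀ y ∈ DD, y ∈ A.leafList) → (∀ y ∈ DD, y ∈ w.leafList) →
                      (δ * (1-δ) * (C.card:ℝ) / 2 ≤ (DD.card:ℝ)) →
                      x ∈ C → x ∉ w.leafList → x ∉ A.leafList →
                      (∀ S' : RTree L, Embeds S' A →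
                        Embeds (RTree.node S' (RTree.leaf x)) (RTree.node vL vR)) →
                      ∃ S : RTree L, S.IsPhylo ∧ Embeds S (RTree.node vL vR) ∧ Embeds S u ∧
                        (C.card:ℝ) * (1-δ)^(h+1) ≤ (2/δ)^S.numLeaves := by
                    intro A DD x hbA hndA hhA hDDne hDDA hDDw hDDcard hxC hxw hxA hcomb
                    obtain ⟨S', hphS', hSA, hSw, hbound⟩ := ih A w DD hbA hndA hhA hDDne hDDA hDDw
                    have hxS' : x ∉ S'.leafList := fun hmem =>
                      hxA (leafList_subset_of_embeds hSA x hmem)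
                    refine ⟨RTree.node S' (RTree.leaf x), ?_,
                      hcomb S' hSA, attach_lemma hwsub hSw (hCu x hxC) hxw, ?_⟩
                    · show (S'.leafList ++ [x]).Nodup
                      rw [List.nodup_append]
                      refine ⟨hphS', List.nodup_singleton x, ?_⟩
                      intro a ha b hb hab
                      simp at hb
                      subst hb hab
                      exact hxS' ha
                    · have hnum : (RTree.node S' (RTree.leaf x)).numLeaves = S'.numLeaves + 1 := by
                        simp [RTree.numLeaves, RTree.leafList]
                      rw [hnum, pow_succ (2/δ) S'.numLeaves]
                      have hδne : δ ≠ 0 := ne_of_gt hδ0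
                      have e1 : (C.card:ℝ) * (1-δ)^(h+1) =
                          (δ * (1-δ) * (C.card:ℝ) / 2) * (1-δ)^h * (2/δ) := by
                        field_simp
                        ring
                      rw [e1]
                      have e2 : (δ * (1-δ) * (C.card:ℝ) / 2) * (1-δ)^h ≤ (DD.card:ℝ) * (1-δ)^h :=
                        mul_le_mul_of_nonneg_right hDDcard (by positivity)
                      calc (δ * (1-δ) * (C.card:ℝ) / 2) * (1-δ)^h * (2/δ)
                          ≤ ((DD.card:ℝ) * (1-δ)^h) * (2/δ) :=
                            mul_le_mul_of_nonneg_right e2 (le_of_lt h2δ)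
                        _ ≤ (2/δ)^S'.numLeaves * (2/δ) :=
                            mul_le_mul_of_nonneg_right hbound (le_of_lt h2δ)
                  -- facts about members of ER / EL
                  have hERfact : ∀ x ∈ ER, x ∈ C ∧ x ∉ w.leafList ∧ x ∈ vR.leafList ∧
                      x ∉ vL.leafList := by
                    intro x hx
                    rw [hERdef, Finset.mem_filter] at hx
                    obtain ⟨hxC, hxw⟩ := hEmem x hx.1
                    exact ⟨hxC, hxw, hx.2, fun hm => hdisj hm hx.2⟩
                  have hELfact : ∀ x ∈ EL, x ∈ C ∧ x ∉ w.leafList ∧ x ∈ vL.leafList ∧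
                      x ∉ vR.leafList := by
                    intro x hx
                    rw [hELdef, Finset.mem_filter] at hx
                    obtain ⟨hxC, hxw⟩ := hEmem x hx.1
                    exact ⟨hxC, hxw, hx.2, fun hm => hdisj hx.2 hm⟩
                  have hDLmem : ∀ y ∈ DL, y ∈ vL.leafList ∧ y ∈ w.leafList := by
                    intro y hy
                    rw [hDLdef, Finset.mem_filter] at hy
                    have := Finset.mem_filter.mp (hDdef ▸ hy.1)
                    exact ⟨hy.2, this.2⟩
                  have hDRmem : ∀ y ∈ DR, y ∈ vR.leafList ∧ y ∈ w.leafList := by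
                    intro y hy
                    rw [hDRdef, Finset.mem_filter] at hy
                    have := Finset.mem_filter.mp (hDdef ▸ hy.1)
                    exact ⟨hy.2, this.2⟩
                  have hcast : (DL.card:ℝ) + (DR.card:ℝ) = (D.card:ℝ) := by exact_mod_cast hsumDLR
                  by_cases hER : ER.Nonempty
                  · by_cases hEL : EL.Nonempty
                    · by_cases hDLR : DR.card ≤ DL.card
                      · -- recurse into vL, extra leaf from ER
                        obtain ⟨x, hxER⟩ := hER
                        obtain ⟨hxC, hxw, hxvR, hxvL⟩ := hERfact x hxER
                        have hDLbig : δ * (1-δ) * (C.card:ℝ) / 2 ≤ (DL.card:ℝ) := by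
                          have hLR : (DR.card:ℝ) ≤ (DL.card:ℝ) := by exact_mod_cast hDLR
                          have hq : (0:ℝ) ≤ (1-δ) * (C.card:ℝ) * (1 - 2*δ) :=
                            mul_nonneg (mul_nonneg (le_of_lt h1δ) (le_of_lt hCpos))
                              (by linarith)
                          linarith only [hq, hLR, hslo, hcast, htdef]
                        have hDLne : DL.Nonempty := by
                          rw [← Finset.card_pos]
                          have hpos : (0:ℝ) < (DL.card:ℝ) :=
                            lt_of_lt_of_le hhalf hDLbig
                          exact_mod_cast hpos
                        exact step vL DL x hbL hndL hhL hDLne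
                          (fun y hy => (hDLmem y hy).1) (fun y hy => (hDLmem y hy).2)
                          hDLbig hxC hxw hxvL
                          (fun S' hS' => Embeds.pair hS' (embeds_leaf_of_mem hxvR))
                      · -- recurse into vR, extra leaf from EL
                        obtain ⟨x, hxEL⟩ := hEL
                        obtain ⟨hxC, hxw, hxvL, hxvR⟩ := hELfact x hxEL
                        have hDRbig : δ * (1-δ) * (C.card:ℝ) / 2 ≤ (DR.card:ℝ) := by
                          have hLR : (DL.card:ℝ) ≤ (DR.card:ℝ) := by
                            have : DL.card ≤ DR.card := by omega
                            exact_mod_cast this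
                          have hq : (0:ℝ) ≤ (1-δ) * (C.card:ℝ) * (1 - 2*δ) :=
                            mul_nonneg (mul_nonneg (le_of_lt h1δ) (le_of_lt hCpos))
                              (by linarith)
                          linarith only [hq, hLR, hslo, hcast, htdef]
                        have hDRne : DR.Nonempty := by
                          rw [← Finset.card_pos]
                          have hpos : (0:ℝ) < (DR.card:ℝ) :=
                            lt_of_lt_of_le hhalf hDRbig
                          exact_mod_cast hpos
                        exact step vR DR x hbR hndR hhR hDRne
                          (fun y hy => (hDRmem y hy).1) (fun y hy => (hDRmem y hy).2)
                          hDRbig hxC hxw hxvR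
                          (fun S' hS' => Embeds.pair_swap hS' (embeds_leaf_of_mem hxvL))
                    · -- EL empty: CL ⊆ DL, recurse into vL, leaf from ER
                      obtain ⟨x, hxER⟩ := hER
                      obtain ⟨hxC, hxw, hxvR, hxvL⟩ := hERfact x hxER
                      have hCLsub : CL ⊆ DL := by
                        intro y hy
                        rw [hCLdef, Finset.mem_filter] at hy
                        have hyD : y ∈ D := by
                          by_contra hyD
                          have hyE : y ∈ E := by
                            rw [hEdef, Finset.mem_sdiff]; exact ⟨hy.1, hyD⟩
                          have : y ∈ EL := by
                            rw [hELdef, Finset.mem_filter]; exact ⟨hyE, hy.2⟩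
                          exact hEL ⟨y, this⟩
                        rw [hDLdef, Finset.mem_filter]
                        exact ⟨hyD, hy.2⟩
                      have hDLbig : δ * (1-δ) * (C.card:ℝ) / 2 ≤ (DL.card:ℝ) := by
                        have h1 : (CL.card:ℝ) ≤ (DL.card:ℝ) := by
                          exact_mod_cast Finset.card_le_card hCLsub
                        have hp1 : (0:ℝ) ≤ δ * (C.card:ℝ) :=
                          mul_nonneg (le_of_lt hδ0) (le_of_lt hCpos)
                        have hp2 : (0:ℝ) ≤ δ * (δ * (C.card:ℝ)) :=
                          mul_nonneg (le_of_lt hδ0) hp1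
                        linarith only [h1, hdL, hp1, hp2]
                      have hDLne : DL.Nonempty :=
                        Finset.Nonempty.mono hCLsub hCLne
                      exact step vL DL x hbL hndL hhL hDLne
                        (fun y hy => (hDLmem y hy).1) (fun y hy => (hDLmem y hy).2)
                        hDLbig hxC hxw hxvL
                        (fun S' hS' => Embeds.pair hS' (embeds_leaf_of_mem hxvR))
                  · -- ER empty: CR ⊆ DR, recurse into vR, leaf from EL
                    have hEL : EL.Nonempty := by
                      obtain ⟨x, hx⟩ := hEne
                      have hxC := hEsubC hx
                      have := hCv' x hxC
                      rw [List.mem_append] at this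
                      rcases this with hm | hm
                      · exact ⟨x, by rw [hELdef, Finset.mem_filter]; exact ⟨hx, hm⟩⟩
                      · exact absurd ⟨x, by rw [hERdef, Finset.mem_filter]; exact ⟨hx, hm⟩⟩ hER
                    obtain ⟨x, hxEL⟩ := hEL
                    obtain ⟨hxC, hxw, hxvL, hxvR⟩ := hELfact x hxEL
                    have hCRsub : CR ⊆ DR := by
                      intro y hy
                      rw [hCRdef, Finset.mem_filter] at hy
                      have hyD : y ∈ D := by
                        by_contra hyD
                        have hyE : y ∈ E := by
                          rw [hEdef, Finset.mem_sdiff]; exact ⟨hy.1, hyD⟩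
                        have : y ∈ ER := by
                          rw [hERdef, Finset.mem_filter]; exact ⟨hyE, hy.2⟩
                        exact hER ⟨y, this⟩
                      rw [hDRdef, Finset.mem_filter]
                      exact ⟨hyD, hy.2⟩
                    have hDRbig : δ * (1-δ) * (C.card:ℝ) / 2 ≤ (DR.card:ℝ) := by
                      have h1 : (CR.card:ℝ) ≤ (DR.card:ℝ) := by
                        exact_mod_cast Finset.card_le_card hCRsub
                      have hp1 : (0:ℝ) ≤ δ * (C.card:ℝ) :=
                        mul_nonneg (le_of_lt hδ0) (le_of_lt hCpos)
                      have hp2 : (0:ℝ) ≤ δ * (δ * (C.card:ℝ)) :=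
                        mul_nonneg (le_of_lt hδ0) hp1
                      linarith only [h1, hdR, hp1, hp2]
                    have hDRne : DR.Nonempty :=
                      Finset.Nonempty.mono hCRsub hCRne
                    exact step vR DR x hbR hndR hhR hDRne
                      (fun y hy => (hDRmem y hy).1) (fun y hy => (hDRmem y hy).2)
                      hDRbig hxC hxw hxvR
                      (fun S' hS' => Embeds.pair_swap hS' (embeds_leaf_of_mem hxvL))
            · -- CL empty: everything on the right
              have hCvR : ∀ x ∈ C, x ∈ vR.leafList := by
                intro x hx
                have := hCv' x hx
                rw [List.mem_append] at this
                rcases this with hm | hm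
                · exact absurd ⟨x, by rw [hCLdef, Finset.mem_filter]; exact ⟨hx, hm⟩⟩ hCLne
                · exact hm
              obtain ⟨S, hphS, hSR, hSu, hbound⟩ := ih vR u C hbR hndR hhR hne hCvR hCu
              refine ⟨S, hphS, Embeds.right hSR, hSu, ?_⟩
              calc (C.card:ℝ) * (1-δ)^(h+1) = ((C.card:ℝ) * (1-δ)^h) * (1-δ) := by ring
                _ ≤ ((C.card:ℝ) * (1-δ)^h) * 1 := by
                    apply mul_le_mul_of_nonneg_left (by linarith) (by positivity)
                _ = (C.card:ℝ) * (1-δ)^h := by ring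
                _ ≤ (2/δ)^S.numLeaves := hbound
          · -- CR empty: everything on the left
            have hCvL : ∀ x ∈ C, x ∈ vL.leafList := by
              intro x hx
              have := hCv' x hx
              rw [List.mem_append] at this
              rcases this with hm | hm
              · exact hm
              · exact absurd ⟨x, by rw [hCRdef, Finset.mem_filter]; exact ⟨hx, hm⟩⟩ hCRne
            obtain ⟨S, hphS, hSL, hSu, hbound⟩ := ih vL u C hbL hndL hhL hne hCvL hCu
            refine ⟨S, hphS, Embeds.left hSL, hSu, ?_⟩
            calc (C.card:ℝ) * (1-δ)^(h+1) = ((C.card:ℝ) * (1-δ)^h) * (1-δ) := by ring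
              _ ≤ ((C.card:ℝ) * (1-δ)^h) * 1 := by
                  apply mul_le_mul_of_nonneg_left (by linarith) (by positivity)
              _ = (C.card:ℝ) * (1-δ)^h := by ring
              _ ≤ (2/δ)^S.numLeaves := hbound
end RTreeAux

/-- Let `δ ∈ (0,1/2)` and `α := (1 + log(1-δ))/(1 - log δ)`.  If `T₁`
is a rooted balanced binary phylogenetic tree on `2^m` leaves and `T₂` is an arbitrary
rooted binary phylogenetic tree with `L(T₂) = L(T₁)`, then `mast{T₁,T₂} ≥ α·m`. -/
theorem stmt_2 {L : Type} (m : ℕ) (T₁ T₂ : RTree L) (δ : ℝ)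
    (h₁ : T₁.IsPhylo) (h₂ : T₂.IsPhylo)
    (hbal : T₁.IsBalanced) (hcard : T₁.numLeaves = 2 ^ m)
    (hL : T₂.leafSet = T₁.leafSet)
    (hδ : δ ∈ Set.Ioo (0 : ℝ) (1/2)) :
    (1 + Real.logb 2 (1 - δ)) / (1 - Real.logb 2 δ) * m ≤ (RTree.mast T₁ T₂ : ℝ) := by
  obtain ⟨hδ0, hδ2⟩ := hδ
  have h1δ : (0:ℝ) < 1 - δ := by linarith
  have hδ1 : δ < 1 := by linarith
  have hh : T₁.height = m := by
    have h2 := RTreeAux.numLeaves_balanced hbal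
    rw [hcard] at h2
    exact (Nat.pow_right_injective (le_refl 2) h2.symm)
  set C := T₁.leafList.toFinset with hCdef
  have hcardC : C.card = 2 ^ m := by
    rw [hCdef, List.toFinset_card_of_nodup h₁]
    exact hcard
  have hne : C.Nonempty := by
    rw [← Finset.card_pos, hcardC]
    exact pow_pos (by norm_num) m
  have hCv : ∀ x ∈ C, x ∈ T₁.leafList := fun x hx => List.mem_toFinset.mp hx
  have hCu : ∀ x ∈ C, x ∈ T₂.leafList := by
    intro x hx
    have hxm : x ∈ T₁.leafSet := List.mem_toFinset.mp hx
    rw [← hL] at hxm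
    exact hxm
  obtain ⟨S, hphS, hS1, hS2, hbound⟩ :=
    RTreeAux.main_lemma hδ0 hδ2 m T₁ T₂ C hbal h₁ hh hne hCv hCu
  have hk : S.numLeaves ≤ RTree.mast T₁ T₂ := by
    apply le_csSup
    · refine ⟨T₁.numLeaves, fun n hn => ?_⟩
      obtain ⟨S', _, h2', _, h4'⟩ := hn
      exact h4' ▸ RTreeAux.numLeaves_le_of_embeds h2'
    · exact ⟨S, hphS, hS1, hS2, rfl⟩
  have hbound' : (2:ℝ)^m * (1-δ)^m ≤ (2/δ)^S.numLeaves := by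
    rw [hcardC] at hbound
    push_cast at hbound
    exact hbound
  have hlhs : (0:ℝ) < 2^m * (1-δ)^m := by positivity
  have hb2 : (1:ℝ) < 2 := by norm_num
  have hlog := Real.logb_le_logb_of_le hb2 hlhs hbound'
  have hδne : δ ≠ 0 := ne_of_gt hδ0
  have e1 : Real.logb 2 ((2:ℝ)^m * (1-δ)^m) =
      (m:ℝ) * (1 + Real.logb 2 (1-δ)) := by
    rw [Real.logb_mul (by positivity) (by positivity), Real.logb_pow, Real.logb_pow,
      Real.logb_self_eq_one hb2]
    ring
  have e2 : Real.logb 2 ((2/δ)^S.numLeaves) =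
      (S.numLeaves:ℝ) * (1 - Real.logb 2 δ) := by
    rw [Real.logb_pow, Real.logb_div (by norm_num) hδne, Real.logb_self_eq_one hb2]
  rw [e1, e2] at hlog
  have hden : (0:ℝ) < 1 - Real.logb 2 δ := by
    have := Real.logb_neg hb2 hδ0 hδ1
    linarith
  rw [div_mul_eq_mul_div, div_le_iff₀ hden]
  have hkR : (S.numLeaves:ℝ) ≤ (RTree.mast T₁ T₂ : ℝ) := by exact_mod_cast hk
  have hmono : (S.numLeaves:ℝ) * (1 - Real.logb 2 δ) ≤
      (RTree.mast T₁ T₂ : ℝ) * (1 - Real.logb 2 δ) :=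
    mul_le_mul_of_nonneg_right hkR (le_of_lt hden)
  linarith only [hlog, hmono]
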